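/- arXiv:2305.18697 — 2 statements merged into one kernel-verified Lean document; each statement's English description precedes it below -/
import Mathlib

section
/- In a group, if S_{rs} S_{rj} S_{sj} = S_{rj} S_{sj} S_{rs} holds, then the relation [S_{ij}, S_{sj} S_{rs} S_{sj}^{-1}] = 1 is equivalent to the relation [S_{rs}, S_{rj} S_{ij} S_{rj}^{-1}] = 1. -/
/-- In a group, if `S_rs * S_rj * S_sj = S_rj * S_sj * S_rs`, then
`[S_ij, S_sj * S_rs * S_sj⁻¹] = 1` iff `[S_rs, S_rj * S_ij * S_rj⁻¹] = 1`. -/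
theorem stmt0 {G : Type*} [Group G] (Sij Srs Srj Ssj : G)
    (h : Srs * Srj * Ssj = Srj * Ssj * Srs) :
    Sij * (Ssj * Srs * Ssj⁻¹) * Sij⁻¹ * (Ssj * Srs * Ssj⁻¹)⁻¹ = 1 ↔
      Srs * (Srj * Sij * Srj⁻¹) * Srs⁻¹ * (Srj * Sij * Srj⁻¹)⁻¹ = 1 := by
  have key : Ssj * Srs * Ssj⁻¹ = Srj⁻¹ * Srs * Srj := by
    have h2 : Srj⁻¹ * (Srs * Srj * Ssj) * Ssj⁻¹ = Srj⁻¹ * (Srj * Ssj * Srs) * Ssj⁻¹ := by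
      rw [h]
    calc Ssj * Srs * Ssj⁻¹ = Srj⁻¹ * (Srj * Ssj * Srs) * Ssj⁻¹ := by group
      _ = Srj⁻¹ * (Srs * Srj * Ssj) * Ssj⁻¹ := h2.symm
      _ = Srj⁻¹ * Srs * Srj := by group
  rw [key]
  open scoped commutatorElement in
  show ⁅Sij, Srj⁻¹ * Srs * Srj⁆ = 1 ↔ ⁅Srs, Srj * Sij * Srj⁻¹⁆ = 1
  rw [commutatorElement_eq_one_iff_mul_comm, commutatorElement_eq_one_iff_mul_comm]
  constructor
  · intro hc
    calc Srs * (Srj * Sij * Srj⁻¹) = Srj * ((Srj⁻¹ * Srs * Srj) * Sij) * Srj⁻¹ := by group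
      _ = Srj * (Sij * (Srj⁻¹ * Srs * Srj)) * Srj⁻¹ := by rw [hc]
      _ = (Srj * Sij * Srj⁻¹) * Srs := by group
  · intro hc
    calc Sij * (Srj⁻¹ * Srs * Srj) = Srj⁻¹ * ((Srj * Sij * Srj⁻¹) * Srs) * Srj := by group
      _ = Srj⁻¹ * (Srs * (Srj * Sij * Srj⁻¹)) * Srj := by rw [hc]
      _ = (Srj⁻¹ * Srs * Srj) * Sij := by group
end

section
/- For a generic arrangement A^0 = {H_1^0,...,H_n^0} of n hyperplanes in C^k (n > k), and any (k+1)-element subset L of {1,...,n}, the set D_L of translation parameters (t_1,...,t_n) ∈ C^n such that the translated hyperplanes {H_p^0 + α_p t_p : p ∈ L} have nonempty common intersection is an affine hyperplane in C^n. -/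
/-- For a generic arrangement of `n` hyperplanes
`H_p⁰ = {x ∈ ℂ^k | ∑ i, α p i * x i = c p}` with unit normals `α p`
(every `k` of them meet in a single point), and any `(k+1)`-subset `L` of the
index set, the set `D_L` of translation parameters `t ∈ ℂ^n` such that the
translated hyperplanes `{x | ∑ i, α p i * x i = c p + t p}`, `p ∈ L`, have a
common point is an affine hyperplane in `ℂ^n`. -/
theorem stmt19 (k n : ℕ) (hkn : k < n)
    (α : Fin n → Fin k → ℂ) (c : Fin n → ℂ)
    (hunit : ∀ p, ∑ i, α p i * α p i = 1)
    (hgen : ∀ K : Finset (Fin n), K.card = k →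
      ∃! x : Fin k → ℂ, ∀ p ∈ K, ∑ i, α p i * x i = c p)
    (L : Finset (Fin n)) (hL : L.card = k + 1) :
    ∃ (f : (Fin n → ℂ) →ₗ[ℂ] ℂ) (d : ℂ), f ≠ 0 ∧
      {t : Fin n → ℂ |
        ∃ x : Fin k → ℂ, ∀ p ∈ L, ∑ i, α p i * x i = c p + t p} =
      {t : Fin n → ℂ | f t = d} := by
  have hL0 : L.Nonempty := by rw [← Finset.card_pos, hL]; omega
  obtain ⟨q, hq⟩ := hL0
  set K := L.erase q with hKdef
  have hqK : q ∉ K := Finset.notMem_erase q L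
  have hK : K.card = k := by rw [hKdef, Finset.card_erase_of_mem hq, hL]; omega
  -- the evaluation linear map
  let B : (Fin k → ℂ) →ₗ[ℂ] (↥K → ℂ) :=
    { toFun := fun x p => ∑ i, α p i * x i
      map_add' := by intro x y; funext p; simp [mul_add, Finset.sum_add_distrib]
      map_smul' := by intro a x; funext p; simp [Finset.mul_sum, mul_left_comm] }
  have hBinj : Function.Injective B := by
    rw [← LinearMap.ker_eq_bot, LinearMap.ker_eq_bot']
    intro x hx
    obtain ⟨y, hy, hyu⟩ := hgen K hK
    have h1 : y + x = y := hyu (y + x) (by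
      intro p hp
      have h0 : ∑ i, α p i * x i = 0 := congrFun hx ⟨p, hp⟩
      have h2 := hy p hp
      simp only [Pi.add_apply, mul_add, Finset.sum_add_distrib, h2, h0, add_zero])
    have := congrArg (· - y) h1
    simpa using this
  have hfr : Module.finrank ℂ (Fin k → ℂ) = Module.finrank ℂ (↥K → ℂ) := by
    simp [Module.finrank_fintype_fun_eq_card, Fintype.card_coe, hK]
  have hBsurj := (LinearMap.injective_iff_surjective_of_finrank_eq_finrank hfr).mp hBinj
  let e : (Fin k → ℂ) ≃ₗ[ℂ] (↥K → ℂ) := LinearEquiv.ofBijective B ⟨hBinj, hBsurj⟩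
  have heB : ∀ y : ↥K → ℂ, ∀ p : ↥K, ∑ i, α p i * (e.symm y) i = y p := by
    intro y p
    have := e.apply_symm_apply y
    exact congrFun this p
  let dot : (Fin k → ℂ) →ₗ[ℂ] ℂ :=
    { toFun := fun x => ∑ i, α q i * x i
      map_add' := by intro x y; simp [mul_add, Finset.sum_add_distrib]
      map_smul' := by intro a x; simp [Finset.mul_sum, mul_left_comm] }
  let restr : (Fin n → ℂ) →ₗ[ℂ] (↥K → ℂ) :=
    LinearMap.funLeft ℂ ℂ (fun p : ↥K => (p : Fin n))
  let f : (Fin n → ℂ) →ₗ[ℂ] ℂ :=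
    dot ∘ₗ (e.symm : (↥K → ℂ) →ₗ[ℂ] (Fin k → ℂ)) ∘ₗ restr - LinearMap.proj q
  refine ⟨f, c q - dot (e.symm (fun p : ↥K => c p)), ?_, ?_⟩
  · intro hf
    have h0 : f (Pi.single q 1) = 0 := by rw [hf]; rfl
    have hr : restr (Pi.single q 1) = 0 := by
      funext p
      have : (p : Fin n) ≠ q := fun h => hqK (h ▸ p.2)
      simp [restr, LinearMap.funLeft, Pi.single_eq_of_ne this]
    simp only [f, LinearMap.sub_apply, LinearMap.comp_apply, hr, map_zero,
      LinearMap.proj_apply, Pi.single_eq_same] at h0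
    norm_num at h0
  · ext t
    simp only [Set.mem_setOf_eq]
    have hsplit : e.symm (fun p : ↥K => c p + t p)
        = e.symm (fun p : ↥K => c p) + e.symm (restr t) := by
      rw [← map_add]; rfl
    have hft : f t = dot (e.symm (restr t)) - t q := rfl
    constructor
    · rintro ⟨x, hx⟩
      have hxK : x = e.symm (fun p : ↥K => c p + t p) := by
        apply hBinj
        funext p
        show ∑ i, α p i * x i = ∑ i, α (p : Fin n) i * (e.symm (fun p : ↥K => c p + t p)) i
        rw [hx p (Finset.mem_of_mem_erase p.2), heB]
      have hxq : dot ((e.symm fun p : ↥K => c p) + e.symm (restr t)) = c q + t q := by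
        rw [← hsplit, ← hxK]
        exact hx q hq
      rw [map_add] at hxq
      rw [hft]
      linear_combination hxq
    · intro hf
      refine ⟨e.symm (fun p : ↥K => c p + t p), ?_⟩
      intro p hp
      rcases eq_or_ne p q with rfl | hpq
      · rw [hsplit]
        have : dot (e.symm (fun p : ↥K => c p) + e.symm (restr t)) = c p + t p := by
          rw [map_add]
          rw [hft] at hf
          linear_combination hf
        exact this
      · exact heB _ ⟨p, Finset.mem_erase.mpr ⟨hpq, hp⟩⟩
end
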